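/- There exist universal constants C < ∞ and c₀ > 0 such that for all real numbers m, u, y, e with u ≤ y and ((y − m)₊ + 1)·|e| ≤ c₀, one has |Ψ(y − m − e)/Ψ(u − m − e) − Ψ(y − m)/Ψ(u − m)| ≤ C·((y − m)₊ + (u − m)₊ + 1)·|e|, where x₊ := max(x, 0). -/

import Mathlib

open MeasureTheory Set Filter

/-- The standard normal density `φ(z) = (2π)^{-1/2} exp(−z²/2)`. -/
noncomputable def phi (x : ℝ) : ℝ := (Real.sqrt (2 * Real.pi))⁻¹ * Real.exp (-x ^ 2 / 2)

/-- The standard Gaussian survival function `Ψ(x) = ∫_x^∞ φ(z) dz`. -/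
noncomputable def Psi (x : ℝ) : ℝ := ∫ z in Set.Ioi x, phi z

lemma phi_pos (x : ℝ) : 0 < phi x := by
  apply mul_pos (inv_pos.2 (Real.sqrt_pos.2 (by positivity))) (Real.exp_pos _)

lemma phi_cont : Continuous phi := by
  unfold phi; fun_prop

lemma phi_integrable : Integrable phi := by
  have h : Integrable fun x : ℝ => Real.exp (-(1/2) * x ^ 2) := integrable_exp_neg_mul_sq (by norm_num)
  have := h.const_mul (Real.sqrt (2 * Real.pi))⁻¹
  refine this.congr (Eventually.of_forall fun x => ?_)
  unfold phi; ring_nf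

lemma hasDerivAt_phi (x : ℝ) : HasDerivAt phi (-x * phi x) x := by
  have h : HasDerivAt (fun z : ℝ => Real.exp (-z ^ 2 / 2)) (Real.exp (-x ^ 2 / 2) * (-x)) x := by
    have h1 : HasDerivAt (fun z : ℝ => -z ^ 2 / 2) (-x) x := by
      have := ((hasDerivAt_pow 2 x).neg).div_const 2
      refine this.congr_deriv ?_; norm_num; ring
    exact h1.exp
  have := h.const_mul (Real.sqrt (2 * Real.pi))⁻¹
  refine this.congr_deriv ?_; unfold phi; ring

lemma Psi_pos (x : ℝ) : 0 < Psi x := by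
  have h : (∫ z in Set.Ioc x (x+1), phi z) ≤ Psi x :=
    setIntegral_mono_set phi_integrable.integrableOn
      (Eventually.of_forall fun z => (phi_pos z).le)
      (Eventually.of_forall fun z hz => hz.1)
  refine lt_of_lt_of_le ?_ h
  rw [← intervalIntegral.integral_of_le (by linarith : x ≤ x + 1)]
  exact intervalIntegral.intervalIntegral_pos_of_pos
    (phi_cont.intervalIntegrable x (x+1)) phi_pos (by linarith)

lemma Psi_anti : Antitone Psi := fun s t hst =>
  setIntegral_mono_set phi_integrable.integrableOn
    (Eventually.of_forall fun z => (phi_pos z).le)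
    (Eventually.of_forall fun z hz => lt_of_le_of_lt hst hz)

lemma hasDerivAt_Psi (x : ℝ) : HasDerivAt Psi (-phi x) x := by
  have key : ∀ t : ℝ, Psi t = Psi 0 - ∫ z in (0:ℝ)..t, phi z := by
    intro t
    have h1 : ((∫ z in Iic t, phi z) - ∫ z in Iic (0:ℝ), phi z) = ∫ z in (0:ℝ)..t, phi z :=
      intervalIntegral.integral_Iic_sub_Iic phi_integrable.integrableOn phi_integrable.integrableOn
    have h2 : ∀ s : ℝ, (∫ z in Iic s, phi z) + Psi s = ∫ z, phi z :=
      fun s => intervalIntegral.integral_Iic_add_Ioi phi_integrable.integrableOn phi_integrable.integrableOn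
    have := h2 t; have := h2 0; linarith
  have hD : HasDerivAt (fun t => ∫ z in (0:ℝ)..t, phi z) (phi x) x :=
    intervalIntegral.integral_hasDerivAt_right (phi_cont.intervalIntegrable 0 x)
      phi_cont.stronglyMeasurable.stronglyMeasurableAtFilter phi_cont.continuousAt
  have : HasDerivAt (fun t => Psi 0 - ∫ z in (0:ℝ)..t, phi z) (-phi x) x := (hD.const_sub _)
  simpa [← key] using this

lemma phi_tendsto : Tendsto phi atTop (nhds 0) := by
  have h1 : Tendsto (fun z : ℝ => -z ^ 2 / 2) atTop atBot := by
    apply Tendsto.atBot_div_const (by norm_num : (0:ℝ) < 2)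
    exact tendsto_neg_atBot_iff.2 (tendsto_pow_atTop two_ne_zero)
  have h2 := (Real.tendsto_exp_atBot.comp h1).const_mul (Real.sqrt (2 * Real.pi))⁻¹
  rw [mul_zero] at h2
  refine h2.congr fun z => ?_
  simp [phi, Function.comp]

lemma hazard_pos {x : ℝ} (hx : 0 ≤ x) : phi x ≤ (x + 1) * Psi x := by
  set f : ℝ → ℝ := fun z => -phi z / (z + 1) with hf
  set g : ℝ → ℝ := fun z => phi z * ((z ^ 2 + z + 1) / (z + 1) ^ 2) with hg
  have hne : ∀ z ∈ Ici x, z + 1 ≠ 0 := fun z hz => by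
    have : (0:ℝ) ≤ z := le_trans hx hz; positivity
  have hderiv : ∀ z ∈ Ici x, HasDerivAt f (g z) z := by
    intro z hz
    have hz0 : (0:ℝ) ≤ z := le_trans hx hz
    have h1 : HasDerivAt (fun w : ℝ => -phi w) (z * phi z) z := by
      exact (hasDerivAt_phi z).neg.congr_deriv (by ring)
    have h2 : HasDerivAt (fun w : ℝ => w + 1) 1 z := by
      simpa using (hasDerivAt_id z).add_const 1
    have := h1.div h2 (hne z hz)
    refine this.congr_deriv ?_
    simp only [hg]
    field_simp [hne z hz]
    ring
  have hgb : ∀ z ∈ Ioi x, 0 ≤ g z ∧ g z ≤ phi z := by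
    intro z hz
    have hz0 : (0:ℝ) ≤ z := le_trans hx (le_of_lt hz)
    have hfrac0 : 0 ≤ (z ^ 2 + z + 1) / (z + 1) ^ 2 := by positivity
    have hfrac1 : (z ^ 2 + z + 1) / (z + 1) ^ 2 ≤ 1 := by
      rw [div_le_one (by positivity)]; nlinarith
    constructor
    · exact mul_nonneg (phi_pos z).le hfrac0
    · calc phi z * ((z ^ 2 + z + 1) / (z + 1) ^ 2) ≤ phi z * 1 :=
            mul_le_mul_of_nonneg_left hfrac1 (phi_pos z).le
        _ = phi z := mul_one _
  have hgint : IntegrableOn g (Ioi x) := by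
    refine Integrable.mono phi_integrable.integrableOn ?_ ?_
    · refine ContinuousOn.aestronglyMeasurable ?_ measurableSet_Ioi
      apply ContinuousOn.mul phi_cont.continuousOn
      apply ContinuousOn.div (by fun_prop) (by fun_prop)
      intro z hz
      have : (0:ℝ) ≤ z := le_trans hx (le_of_lt hz); positivity
    · filter_upwards [ae_restrict_mem measurableSet_Ioi] with z hz
      rw [Real.norm_eq_abs, Real.norm_eq_abs, abs_of_nonneg (hgb z hz).1,
        abs_of_nonneg (phi_pos z).le]
      exact (hgb z hz).2
  have hften : Tendsto f atTop (nhds 0) := by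
    apply squeeze_zero_norm' ?_ phi_tendsto
    filter_upwards [eventually_ge_atTop (0:ℝ)] with z hz
    rw [Real.norm_eq_abs, hf, abs_div, abs_neg, abs_of_nonneg (phi_pos z).le,
      abs_of_nonneg (by linarith : (0:ℝ) ≤ z + 1)]
    rw [div_le_iff₀ (by linarith)]
    nlinarith [phi_pos z]
  have key : ∫ z in Ioi x, g z = 0 - f x :=
    integral_Ioi_of_hasDerivAt_of_tendsto' hderiv hgint hften
  have h2 : ∫ z in Ioi x, g z ≤ Psi x := by
    refine setIntegral_mono_on hgint phi_integrable.integrableOn measurableSet_Ioi ?_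
    exact fun z hz => (hgb z hz).2
  have hx1 : (0:ℝ) < x + 1 := by linarith
  have : phi x / (x + 1) ≤ Psi x := by
    rw [hf] at key; simp only [zero_sub, neg_div, neg_neg] at key
    linarith [key ▸ h2]
  calc phi x = (x + 1) * (phi x / (x + 1)) := by field_simp
    _ ≤ (x + 1) * Psi x := by apply mul_le_mul_of_nonneg_left this hx1.le

lemma hazard (x : ℝ) : phi x ≤ 2 * (max x 0 + 1) * Psi x := by
  rcases le_or_gt 0 x with hx | hx
  · have := hazard_pos hx
    have h2 : (x + 1) * Psi x ≤ 2 * (max x 0 + 1) * Psi x := by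
      rw [max_eq_left hx]
      nlinarith [Psi_pos x]
    linarith
  · -- x < 0 : phi x ≤ phi 0 ≤ 2 * phi 1 ≤ 2 * Psi 0 ≤ 2 * Psi x
    have h1 : phi x ≤ phi 0 := by
      unfold phi
      apply mul_le_mul_of_nonneg_left _ (by positivity)
      apply Real.exp_le_exp.2; nlinarith
    have hexp : Real.exp (1/2 : ℝ) < 2 := by
      have h := Real.exp_one_lt_d9
      nlinarith [Real.exp_pos (1/2 : ℝ), Real.exp_add (1/2 : ℝ) (1/2 : ℝ),
        Real.exp_pos (1:ℝ)]
    have h2 : phi 0 ≤ 2 * phi 1 := by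
      unfold phi
      rw [show ((-(0:ℝ)^2/2)) = 0 by norm_num, Real.exp_zero]
      rw [show ((-(1:ℝ)^2/2)) = -(1/2) by norm_num, Real.exp_neg]
      have hs : (0:ℝ) < (Real.sqrt (2 * Real.pi))⁻¹ := by
        have : (0:ℝ) < Real.sqrt (2*Real.pi) := Real.sqrt_pos.2 (by positivity)
        positivity
      rw [mul_one]
      calc (Real.sqrt (2 * Real.pi))⁻¹ = (Real.sqrt (2 * Real.pi))⁻¹ * 1 := by ring
        _ ≤ (Real.sqrt (2 * Real.pi))⁻¹ * (2 * (Real.exp (1/2))⁻¹) := by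
            apply mul_le_mul_of_nonneg_left _ hs.le
            rw [le_mul_inv_iff₀ (Real.exp_pos _)]; linarith
        _ = 2 * ((Real.sqrt (2 * Real.pi))⁻¹ * (Real.exp (1/2))⁻¹) := by ring
    have h3 : phi 1 ≤ Psi 0 := by
      have hle : (∫ z in Set.Ioc (0:ℝ) 1, phi z) ≤ Psi 0 :=
        setIntegral_mono_set phi_integrable.integrableOn
          (Eventually.of_forall fun z => (phi_pos z).le)
          (Eventually.of_forall fun z hz => hz.1)
      refine le_trans ?_ hle
      rw [← intervalIntegral.integral_of_le (by norm_num : (0:ℝ) ≤ 1)]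
      have : phi 1 = ∫ _ in (0:ℝ)..1, phi 1 := by simp
      rw [this]
      apply intervalIntegral.integral_mono_on (by norm_num)
        (intervalIntegrable_const) (phi_cont.intervalIntegrable 0 1)
      intro z hz
      unfold phi
      apply mul_le_mul_of_nonneg_left _ (by positivity)
      apply Real.exp_le_exp.2
      rcases hz with ⟨h0, h1'⟩
      nlinarith
    have h4 : Psi 0 ≤ Psi x := Psi_anti hx.le
    have hmax : max x 0 = 0 := max_eq_right hx.le
    rw [hmax]
    linarith

/-- stability of the truncated-Gaussian survival ratio under a small
perturbation `e` of the mean parameter. -/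
theorem stmt18 :
    ∃ C c₀ : ℝ, 0 < c₀ ∧ ∀ m u y e : ℝ, u ≤ y →
      (max (y - m) 0 + 1) * |e| ≤ c₀ →
      |Psi (y - m - e) / Psi (u - m - e) - Psi (y - m) / Psi (u - m)| ≤
        C * (max (y - m) 0 + max (u - m) 0 + 1) * |e| := by
  refine ⟨8, 1, one_pos, ?_⟩
  intro m u y e huy hsmall
  set a := y - m with ha
  set b := u - m with hb
  have hba : b ≤ a := by rw [ha, hb]; linarith
  have hae1 : (0:ℝ) ≤ max a 0 := le_max_right _ _
  have he1 : |e| ≤ 1 := by nlinarith [abs_nonneg e]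
  set F : ℝ → ℝ := fun t => Psi (a - t) / Psi (b - t) with hF
  set K : ℝ := 2 * (max a 0 + 2) with hK
  -- derivative of F
  have hFd : ∀ t : ℝ, HasDerivAt F
      ((phi (a - t) * Psi (b - t) - Psi (a - t) * phi (b - t)) / (Psi (b - t)) ^ 2) t := by
    intro t
    have h1 : HasDerivAt (fun t => Psi (a - t)) (phi (a - t)) t := by
      have := (hasDerivAt_Psi (a - t)).comp t ((hasDerivAt_id t).const_sub a)
      exact this.congr_deriv (by simp)
    have h2 : HasDerivAt (fun t => Psi (b - t)) (phi (b - t)) t := by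
      have := (hasDerivAt_Psi (b - t)).comp t ((hasDerivAt_id t).const_sub b)
      exact this.congr_deriv (by simp)
    have := h1.div h2 (Psi_pos (b - t)).ne'
    exact this
  -- bound on the derivative for t in uIcc 0 e
  have hbound : ∀ t ∈ Set.uIcc (0:ℝ) e,
      ‖(phi (a - t) * Psi (b - t) - Psi (a - t) * phi (b - t)) / (Psi (b - t)) ^ 2‖ ≤ K := by
    intro t ht
    have htabs : |t| ≤ |e| := by
      have h1 := abs_le_max_abs_abs ht.1 ht.2
      rcases le_total 0 e with h | h
      · rw [inf_eq_left.2 h, sup_eq_right.2 h, abs_zero] at h1; simpa using h1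
      · rw [inf_eq_right.2 h, sup_eq_left.2 h, abs_zero] at h1; simpa using h1
    have hPb := Psi_pos (b - t)
    have hPa := Psi_pos (a - t)
    have hPab : Psi (a - t) ≤ Psi (b - t) := Psi_anti (by linarith)
    set M : ℝ := 2 * (max (a - t) 0 + 1) with hM
    have hX : phi (a - t) * Psi (b - t) / (Psi (b - t)) ^ 2 ≤ M := by
      rw [pow_two, ← div_div, mul_div_assoc, div_self hPb.ne', mul_one]
      rw [div_le_iff₀ hPb]
      calc phi (a - t) ≤ 2 * (max (a-t) 0 + 1) * Psi (a - t) := hazard _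
        _ ≤ M * Psi (b - t) := by
            apply mul_le_mul_of_nonneg_left hPab
            positivity
    have hY : Psi (a - t) * phi (b - t) / (Psi (b - t)) ^ 2 ≤ M := by
      have hmax : max (b - t) 0 ≤ max (a - t) 0 := max_le_max (by linarith) le_rfl
      have h1 : phi (b - t) ≤ M * Psi (b - t) := by
        calc phi (b - t) ≤ 2 * (max (b-t) 0 + 1) * Psi (b - t) := hazard _
          _ ≤ M * Psi (b - t) := by
              apply mul_le_mul_of_nonneg_right _ hPb.le
              nlinarith
      rw [pow_two, div_le_iff₀ (mul_pos hPb hPb)]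
      calc Psi (a - t) * phi (b - t) ≤ Psi (b - t) * (M * Psi (b - t)) := by
            apply mul_le_mul hPab h1 (phi_pos _).le hPb.le
        _ = M * (Psi (b - t) * Psi (b - t)) := by ring
    have hXpos : 0 ≤ phi (a - t) * Psi (b - t) / (Psi (b - t)) ^ 2 :=
      div_nonneg (mul_nonneg (phi_pos _).le hPb.le) (sq_nonneg _)
    have hYpos : 0 ≤ Psi (a - t) * phi (b - t) / (Psi (b - t)) ^ 2 :=
      div_nonneg (mul_nonneg hPa.le (phi_pos _).le) (sq_nonneg _)
    have hMK : M ≤ K := by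
      have : max (a - t) 0 ≤ max a 0 + 1 := by
        rcases le_total (a - t) 0 with h | h
        · rw [max_eq_right h]; linarith
        · rw [max_eq_left h]
          have : a - t ≤ a + |t| := by nlinarith [neg_abs_le t]
          calc a - t ≤ a + |t| := this
            _ ≤ max a 0 + 1 := by
                have := le_max_left a 0; linarith [htabs.trans he1]
      rw [hM, hK]; linarith
    rw [Real.norm_eq_abs, sub_div, abs_sub_le_iff]
    constructor
    · linarith
    · linarith
  -- MVT
  have hmvt := (convex_uIcc (0:ℝ) e).norm_image_sub_le_of_norm_hasDerivWithin_le
    (fun t ht => (hFd t).hasDerivWithinAt) hbound (Set.left_mem_uIcc) (Set.right_mem_uIcc)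
  rw [Real.norm_eq_abs, sub_zero, Real.norm_eq_abs] at hmvt
  have hgoal : |Psi (y - m - e) / Psi (u - m - e) - Psi (y - m) / Psi (u - m)| = |F e - F 0| := by
    rw [hF]; norm_num; rfl
  rw [hgoal]
  refine hmvt.trans ?_
  have hbe : (0:ℝ) ≤ max b 0 := le_max_right _ _
  have : K ≤ 8 * (max a 0 + max b 0 + 1) := by rw [hK]; linarith
  nlinarith [abs_nonneg e]
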